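/- arXiv:0904.3433 — 2 statements merged into one kernel-verified Lean document; each statement's English description precedes it below -/
import Mathlib

section
/- Let {a_{i,1}}_{i∈[s]} and {a_{i,2}}_{i∈[s]} be natural numbers with sums at most t₁ and t₂ respectively, set t := t₁ + t₂, and let S ≤ t be such that a_{i,1} + a_{i,2} ≤ S for all i ∈ [s]. Let F be a nonempty fork system with ratio at most r and with bipartition classes V₁(F) (the prongs) and V₂(F) (the centers), where |V₁(F)| ≥ |V₂(F)|, and let |F| denote the size of F. Then there is a mapping φ: [s]×[2] → V₁(F) ∪ V₂(F) such that for all i ∈ [s] the pair {φ(i,1), φ(i,2)} is an edge of F with φ(i,1) ∈ V₁(F) and φ(i,2) ∈ V₂(F), and such that for every v₁ ∈ V₁(F) the sum of a_{i,1} over all i with φ(i,1) = v₁ is at most t₁/|F| + √(12·t·S·|F|), and for every v₂ ∈ V₂(F) the sum of a_{i,2} over all i with φ(i,2) = v₂ is at most r·t₂/|F| + √(12·t·S·|F|). -/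
open SimpleGraph

/-- Vertex set of the complete tripartite graph `K_{n,n,n}`. -/
abbrev TriV (n : ℕ) := (Σ _ : Fin 3, Fin n)

/-- The complete tripartite graph `K_{n,n,n}`. -/
def triK (n : ℕ) : SimpleGraph (TriV n) := completeMultipartiteGraph (fun _ : Fin 3 => Fin n)

/-- The spanning subgraph of a coloured graph formed by the edges of colour `c`. -/
def colSub {V : Type} (G : SimpleGraph V) (col : Sym2 V → Bool) (c : Bool) : SimpleGraph V where
  Adj u v := G.Adj u v ∧ col s(u, v) = c
  symm := by
    constructor
    intro u v h
    refine ⟨G.symm.symm _ _ h.1, ?_⟩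
    rw [Sym2.eq_swap]
    exact h.2
  loopless := ⟨fun v h => G.loopless.irrefl v h.1⟩

/-- The class `𝒦ηₙ` of spanning subgraphs of `K_{n,n,n}` with minimum degree `> (2-η)n`. -/
def KK (n : ℕ) (η : ℝ) (K : SimpleGraph (TriV n)) : Prop :=
  K ≤ triK n ∧ ∀ v : TriV n, (2 - η) * n < (({u | K.Adj v u} : Set (TriV n)).ncard : ℝ)

/-- `M` is a matching in the graph `G`: a set of pairwise vertex-disjoint edges of `G`. -/
def IsMatching' {V : Type} (G : SimpleGraph V) (M : Finset (Sym2 V)) : Prop :=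
  (∀ e ∈ M, e ∈ G.edgeSet) ∧
    ∀ e ∈ M, ∀ f ∈ M, e ≠ f → ∀ v : V, v ∈ e → v ∉ f

/-- `v` is covered by the matching `M`. -/
def MCovers {V : Type} (M : Finset (Sym2 V)) (v : V) : Prop := ∃ e ∈ M, v ∈ e

/-- The matching `M` is connected in `G`: all covered vertices lie in one component of `G`. -/
def MatchConnected {V : Type} (G : SimpleGraph V) (M : Finset (Sym2 V)) : Prop :=
  ∀ u v : V, MCovers M u → MCovers M v → G.Reachable u v

/-- The matching `M` is odd: the component of `G` containing it has an odd cycle. -/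
def MatchOdd {V : Type} (G : SimpleGraph V) (M : Finset (Sym2 V)) : Prop :=
  ∃ (u : V) (p : G.Walk u u), p.IsCycle ∧ Odd p.length ∧
    ∃ v : V, MCovers M v ∧ G.Reachable u v

/-- A coloured graph is `m`-odd if some colour contains an odd connected matching of
size at least `m`. -/
def mOdd (n : ℕ) (K : SimpleGraph (TriV n)) (col : Sym2 (TriV n) → Bool) (m : ℝ) : Prop :=
  ∃ (c : Bool) (M : Finset (Sym2 (TriV n))),
    IsMatching' (colSub K col c) M ∧ MatchConnected (colSub K col c) M ∧
      MatchOdd (colSub K col c) M ∧ m ≤ (M.card : ℝ)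

/-- A fork system of ratio at most `r` in `G`: each element is a fork given by its center
and its (nonempty) set of at most `r` prongs; the forks are pairwise vertex-disjoint. -/
def IsForkSystem {V : Type} (G : SimpleGraph V) (r : ℕ) (F : Finset (V × Finset V)) : Prop :=
  (∀ p ∈ F, p.2.Nonempty ∧ p.1 ∉ p.2 ∧ p.2.card ≤ r ∧ ∀ v ∈ p.2, G.Adj p.1 v) ∧
    ∀ p ∈ F, ∀ q ∈ F, p ≠ q → ∀ v : V, (v = p.1 ∨ v ∈ p.2) → ¬(v = q.1 ∨ v ∈ q.2)

/-- `v` is covered by the fork system `F`. -/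
def FCovers {V : Type} (F : Finset (V × Finset V)) (v : V) : Prop :=
  ∃ p ∈ F, v = p.1 ∨ v ∈ p.2

/-- The fork system `F` is connected in `G`. -/
def ForkConnected {V : Type} (G : SimpleGraph V) (F : Finset (V × Finset V)) : Prop :=
  ∀ u v : V, FCovers F u → FCovers F v → G.Reachable u v

/-- The size of a fork system: the total number of prongs. -/
def forkSize {V : Type} (F : Finset (V × Finset V)) : ℕ := ∑ p ∈ F, p.2.card

/-- A coloured graph is `(m,f,r)`-good if some colour contains a connected matching of size
at least `m` and a connected fork system of ratio at most `r` and size at least `f`. -/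
def Good (n : ℕ) (K : SimpleGraph (TriV n)) (col : Sym2 (TriV n) → Bool)
    (m f : ℝ) (r : ℕ) : Prop :=
  ∃ c : Bool,
    (∃ M, IsMatching' (colSub K col c) M ∧ MatchConnected (colSub K col c) M ∧
      m ≤ (M.card : ℝ)) ∧
    (∃ F, IsForkSystem (colSub K col c) r F ∧ ForkConnected (colSub K col c) F ∧
      f ≤ (forkSize F : ℝ))

/-- `K[D,D']` is `η`-complete w.r.t. `n`: every vertex of either side has at most `ηn`
non-neighbours on the other side. -/
def EtaComplete {V : Type} (K : SimpleGraph V) (n : ℕ) (η : ℝ) (D D' : Finset V) : Prop :=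
  (∀ v ∈ D, (({u | u ∈ D' ∧ ¬K.Adj v u} : Set V).ncard : ℝ) ≤ η * n) ∧
  (∀ v ∈ D', (({u | u ∈ D ∧ ¬K.Adj u v} : Set V).ncard : ℝ) ≤ η * n)

/-- `K[D,D']` is `(η,c)`-complete: `η`-complete and all its edges have colour `c`. -/
def EtaCComplete {V : Type} (K : SimpleGraph V) (col : Sym2 V → Bool) (n : ℕ) (η : ℝ)
    (c : Bool) (D D' : Finset V) : Prop :=
  EtaComplete K n η D D' ∧ ∀ u ∈ D, ∀ v ∈ D', K.Adj u v → col s(u, v) = c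

/-- Pyramid configuration with parameter `η` (Definition (E1)). -/
def PyramidConfig (n : ℕ) (K : SimpleGraph (TriV n)) (col : Sym2 (TriV n) → Bool)
    (η : ℝ) : Prop :=
  ∃ (c c' : Bool) (D1 D2 D1' D2' : Finset (TriV n)),
    Disjoint D1 D2 ∧ Disjoint D1 D1' ∧ Disjoint D1 D2' ∧ Disjoint D2 D1' ∧
      Disjoint D2 D2' ∧ Disjoint D1' D2' ∧
    D1.card ≤ n ∧ D2.card ≤ n ∧ D1'.card ≤ n ∧ D2'.card ≤ n ∧
    (1 - η) * n ≤ (D1.card : ℝ) ∧ (1 - η) * n ≤ (D2.card : ℝ) ∧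
    (1 - η) * n ≤ (D1'.card : ℝ) + (D2'.card : ℝ) ∧
    (D1' = ∅ ∨ 2 * η * n ≤ (D1'.card : ℝ)) ∧
    (D2' = ∅ ∨ 2 * η * n ≤ (D2'.card : ℝ)) ∧
    EtaCComplete K col n η c D1 D1' ∧ EtaCComplete K col n η c D2 D2' ∧
    EtaComplete K n η D1 D2' ∧ EtaComplete K n η D2 D1' ∧ EtaComplete K n η D1 D2 ∧
    (EtaCComplete K col n η c' D1 D2 ∨
      (EtaCComplete K col n η c' D1 D2' ∧ EtaCComplete K col n η c' D1' D2))

/-- Crossing relation of the six bipartite graphs in the spider configuration. -/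
def spiderCross {V : Type} (A1 A2 B1 B2 C1 C2 : Finset V) (u v : V) : Prop :=
  (u ∈ A1 ∧ (v ∈ B2 ∨ v ∈ C2)) ∨ (u ∈ B1 ∧ (v ∈ A2 ∨ v ∈ C2)) ∨
    (u ∈ C1 ∧ (v ∈ A2 ∨ v ∈ B2))

/-- The union of the six bipartite graphs in the spider configuration, as a graph. -/
def spiderGraph {V : Type} (K : SimpleGraph V) (A1 A2 B1 B2 C1 C2 : Finset V) :
    SimpleGraph V where
  Adj u v := K.Adj u v ∧
    (spiderCross A1 A2 B1 B2 C1 C2 u v ∨ spiderCross A1 A2 B1 B2 C1 C2 v u)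
  symm := by
    constructor
    intro u v h
    exact ⟨h.1.symm, h.2.symm⟩
  loopless := ⟨fun v h => K.loopless.irrefl v h.1⟩

/-- Spider configuration with parameter `η` (Definition (E2)). -/
def SpiderConfig (n : ℕ) (K : SimpleGraph (TriV n)) (col : Sym2 (TriV n) → Bool)
    (η : ℝ) : Prop :=
  ∃ (c : Bool) (A1 A2 B1 B2 C1 C2 : Finset (TriV n)),
    List.Pairwise Disjoint [A1, A2, B1, B2, C1, C2] ∧
    (1 - η) * n ≤ ((A1 ∪ A2).card : ℝ) ∧ (1 - η) * n ≤ ((B1 ∪ B2).card : ℝ) ∧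
      (1 - η) * n ≤ ((C1 ∪ C2).card : ℝ) ∧
    EtaCComplete K col n η c A1 B2 ∧ EtaCComplete K col n η c A1 C2 ∧
    EtaCComplete K col n η c B1 A2 ∧ EtaCComplete K col n η c B1 C2 ∧
    EtaCComplete K col n η c C1 A2 ∧ EtaCComplete K col n η c C1 B2 ∧
    (∀ u ∈ A1 ∪ B1 ∪ C1 ∪ A2 ∪ B2 ∪ C2, ∀ v ∈ A1 ∪ B1 ∪ C1 ∪ A2 ∪ B2 ∪ C2,
      (spiderGraph K A1 A2 B1 B2 C1 C2).Reachable u v) ∧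
    ∃ AB AC BA BC CA CB CC : Finset (TriV n),
      A2 = AB ∪ AC ∧ Disjoint AB AC ∧
      B2 = BA ∪ BC ∧ Disjoint BA BC ∧
      C2 = CA ∪ CB ∪ CC ∧ Disjoint CA CB ∧ Disjoint CA CC ∧ Disjoint CB CC ∧
      (AB = ∅ ∨ 2 * η * n ≤ (AB.card : ℝ)) ∧ (AC = ∅ ∨ 2 * η * n ≤ (AC.card : ℝ)) ∧
      (BA = ∅ ∨ 2 * η * n ≤ (BA.card : ℝ)) ∧ (BC = ∅ ∨ 2 * η * n ≤ (BC.card : ℝ)) ∧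
      (CA = ∅ ∨ 2 * η * n ≤ (CA.card : ℝ)) ∧ (CB = ∅ ∨ 2 * η * n ≤ (CB.card : ℝ)) ∧
      (CC = ∅ ∨ 2 * η * n ≤ (CC.card : ℝ)) ∧
      B1.card ≤ A1.card ∧ (C1 ∪ CC).card ≤ B1.card ∧
      AB.card = BA.card ∧ (AB.card : ℝ) ≤ n - (C2.card : ℝ) ∧
      AC.card = CA.card ∧ (AC.card : ℝ) ≤ n - (B2.card : ℝ) ∧
      BC.card = CB.card ∧ (BC.card : ℝ) ≤ n - (A2.card : ℝ) ∧
      (CC = ∅ ∨ AB = ∅) ∧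
      (A2 = ∅ ∨ ((A2 ∪ B2 ∪ CA ∪ CB).card : ℝ) ≤ (1 - η) * (3 / 2) * n) ∧
      (C1 = ∅ ∨ ((A1 ∪ B1 ∪ C1).card : ℝ) < (1 - η) * (3 / 2) * n ∨
        ((B1 ∪ C1).card : ℝ) ≤ (1 - η) * (3 / 4) * n)

/-- A coloured graph is `η`-extremal if it is in pyramid or spider configuration. -/
def Extremal (n : ℕ) (K : SimpleGraph (TriV n)) (col : Sym2 (TriV n) → Bool)
    (η : ℝ) : Prop :=
  PyramidConfig n K col η ∨ SpiderConfig n K col η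

/-- The density of the pair of vertex sets `(U,W)` in `G`. -/
noncomputable def density {V : Type} (G : SimpleGraph V) (U W : Finset V) : ℝ :=
  (({p : V × V | p.1 ∈ U ∧ p.2 ∈ W ∧ G.Adj p.1 p.2} : Set (V × V)).ncard : ℝ) /
    ((U.card : ℝ) * (W.card : ℝ))

/-- `(U,W)` is an `(ε,d)`-regular pair in `G`. -/
def IsRegularPair {V : Type} (G : SimpleGraph V) (ε d : ℝ) (U W : Finset V) : Prop :=
  d ≤ density G U W ∧
    ∀ U' ⊆ U, ∀ W' ⊆ W, ε * U.card ≤ (U'.card : ℝ) → ε * W.card ≤ (W'.card : ℝ) →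
      |density G U' W' - density G U W| ≤ ε

/-- `𝔾` is an `(ε,d)`-reduced graph of `G` with partition `V₀ ∪ V₁ ∪ ... ∪ V_k`
given by the bin set `V0` and the clusters `P i`. -/
def IsReducedGraph {V : Type} [Fintype V] (G : SimpleGraph V) (ε d : ℝ) (k : ℕ)
    (GG : SimpleGraph (Fin k)) (V0 : Finset V) (P : Fin k → Finset V) : Prop :=
  (∀ i, Disjoint V0 (P i)) ∧ (∀ i j, i ≠ j → Disjoint (P i) (P j)) ∧
    (∀ v : V, v ∈ V0 ∨ ∃ i, v ∈ P i) ∧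
    ((V0.card : ℝ) ≤ ε * Fintype.card V) ∧
    (∀ i j, (P i).card = (P j).card) ∧
    (∀ i j, GG.Adj i j → IsRegularPair G ε d (P i) (P j))

/-- The graph obtained from `G` by deleting the vertices in `C` (the deleted vertices
remain as isolated vertices). -/
def delVerts {V : Type} (G : SimpleGraph V) (C : Finset V) : SimpleGraph V where
  Adj u v := G.Adj u v ∧ u ∉ C ∧ v ∉ C
  symm := by
    constructor
    intro u v h
    exact ⟨h.1.symm, h.2.2, h.2.1⟩
  loopless := ⟨fun v h => G.loopless.irrefl v h.1⟩

/-- `C` is an `S`-cut of `T`: every component of `T - C` has at most `S` vertices. -/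
def IsCut {V : Type} (T : SimpleGraph V) (S : ℝ) (C : Finset V) : Prop :=
  ∀ v : V, v ∉ C →
    ((({u | (delVerts T C).Reachable u v} : Set V).ncard : ℝ)) ≤ S

/-- `h` is a `(ρ,L)`-valid assignment of `T` to `GG`. -/
def ValidAssignment {V W : Type} (T : SimpleGraph V) (GG : SimpleGraph W)
    (ρ L : ℝ) (h : V → W) : Prop :=
  (∀ u v : V, T.Adj u v → GG.Adj (h u) (h v)) ∧
  (∀ x : V, ({i | ∃ y : V, T.Adj x y ∧ h y = i} : Set W).ncard ≤ 2) ∧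
  (∀ i : W, (({x : V | h x = i} : Set V).ncard : ℝ) < (1 - ρ) * L)

/-- The bipartite graph `K[D,D']` formed by the edges of `K` between `D` and `D'`. -/
def bipBetween {V : Type} (K : SimpleGraph V) (D D' : Finset V) : SimpleGraph V where
  Adj u v := K.Adj u v ∧ ((u ∈ D ∧ v ∈ D') ∨ (u ∈ D' ∧ v ∈ D))
  symm := by
    constructor
    intro u v h
    refine ⟨h.1.symm, ?_⟩
    rcases h.2 with ⟨hu, hv⟩ | ⟨hu, hv⟩
    · exact Or.inr ⟨hv, hu⟩
    · exact Or.inl ⟨hv, hu⟩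
  loopless := ⟨fun v h => K.loopless.irrefl v h.1⟩


section Helpers
variable {V : Type} [DecidableEq V] {F : Finset (V × Finset V)}

private lemma fid0 (x a w : ℝ) (hw : w ≠ 0) : w * (2 * a * (x / w)) = 2 * a * x := by
  field_simp

private lemma fid1 (E a w f : ℝ) (hw : w ≠ 0) (hf : f ≠ 0) :
    2 * E * (a - w * a / f) / w = 2 * E * a / w - 2 * a / f * E := by
  field_simp

private lemma fid2 (E a w f : ℝ) (hw : w ≠ 0) (hf : f ≠ 0) :
    2 * E * (0 - w * a / f) / w = 0 - 2 * a / f * E := by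
  field_simp
  ring

private lemma fid3 (a f : ℝ) (hf : f ≠ 0) : f * (a / f)^2 = a^2 / f := by
  field_simp

private lemma fid5 (a w c : ℝ) (hw : w ≠ 0) : (a^2 + (w * c)^2) / w = a^2 / w + w * c^2 := by
  field_simp

private lemma fid6 (a w f : ℝ) (hw : w ≠ 0) (hf : f ≠ 0) :
    (0 - w * a / f)^2 / w = w * (a / f)^2 := by
  field_simp
  ring

private lemma center_eq
    (hdisj : ∀ p ∈ F, ∀ q ∈ F, p ≠ q → ∀ v : V, (v = p.1 ∨ v ∈ p.2) → ¬(v = q.1 ∨ v ∈ q.2))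
    {p q : V × Finset V} (hp : p ∈ F) (hq : q ∈ F) (h : p.1 = q.1) : p = q := by
  by_contra hne
  exact hdisj p hp q hq hne p.1 (Or.inl rfl) (Or.inl h)

private lemma prong_eq
    (hdisj : ∀ p ∈ F, ∀ q ∈ F, p ≠ q → ∀ v : V, (v = p.1 ∨ v ∈ p.2) → ¬(v = q.1 ∨ v ∈ q.2))
    {p q : V × Finset V} (hp : p ∈ F) (hq : q ∈ F) {u : V} (hup : u ∈ p.2) (huq : u ∈ q.2) :
    p = q := by
  by_contra hne
  exact hdisj p hp q hq hne u (Or.inr hup) (Or.inr huq)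

private lemma sum_prongs_ite
    (hdisj : ∀ p ∈ F, ∀ q ∈ F, p ≠ q → ∀ v : V, (v = p.1 ∨ v ∈ p.2) → ¬(v = q.1 ∨ v ∈ q.2))
    {p₀ : V × Finset V} (hp₀ : p₀ ∈ F) {u : V} (hu : u ∈ p₀.2) (g : V → ℝ) :
    ∑ p ∈ F, ∑ v ∈ p.2, (if u = v then g v else 0) = g u := by
  have h1 : ∀ p ∈ F, (∑ v ∈ p.2, if u = v then g v else 0) = if u ∈ p.2 then g u else 0 :=
    fun p _ => Finset.sum_ite_eq p.2 u g
  rw [Finset.sum_congr rfl h1]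
  rw [Finset.sum_eq_single_of_mem p₀ hp₀, if_pos hu]
  intro q hq hqne
  rw [if_neg]
  intro huq
  exact hqne (prong_eq hdisj hq hp₀ huq hu)

private lemma sum_centers_ite
    (hdisj : ∀ p ∈ F, ∀ q ∈ F, p ≠ q → ∀ v : V, (v = p.1 ∨ v ∈ p.2) → ¬(v = q.1 ∨ v ∈ q.2))
    {p₀ : V × Finset V} (hp₀ : p₀ ∈ F) (g : V × Finset V → ℝ) :
    ∑ p ∈ F, (if p₀.1 = p.1 then g p else 0) = g p₀ := by
  rw [Finset.sum_eq_single_of_mem p₀ hp₀, if_pos rfl]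
  intro q hq hqne
  rw [if_neg]
  intro h
  exact hqne (center_eq hdisj hq hp₀ h.symm)

private lemma sum_load_prongs
    (hdisj : ∀ p ∈ F, ∀ q ∈ F, p ≠ q → ∀ v : V, (v = p.1 ∨ v ∈ p.2) → ¬(v = q.1 ∨ v ∈ q.2))
    {s : ℕ} (b : Fin s → ℝ) (ψ : Fin s → V)
    (hcov : ∀ i, ∃ p ∈ F, ψ i ∈ p.2) :
    ∑ p ∈ F, ∑ v ∈ p.2, (∑ i, if ψ i = v then b i else 0) = ∑ i, b i := by
  have h1 : ∀ p ∈ F, (∑ v ∈ p.2, ∑ i, if ψ i = v then b i else 0)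
      = ∑ i, ∑ v ∈ p.2, (if ψ i = v then b i else 0) := fun p _ => Finset.sum_comm
  rw [Finset.sum_congr rfl h1, Finset.sum_comm]
  refine Finset.sum_congr rfl fun i _ => ?_
  obtain ⟨p, hp, hip⟩ := hcov i
  exact sum_prongs_ite hdisj hp hip (fun _ => b i)

private lemma sum_load_centers
    (hdisj : ∀ p ∈ F, ∀ q ∈ F, p ≠ q → ∀ v : V, (v = p.1 ∨ v ∈ p.2) → ¬(v = q.1 ∨ v ∈ q.2))
    {s : ℕ} (b : Fin s → ℝ) (ψ : Fin s → V)
    (hcov : ∀ i, ∃ p ∈ F, ψ i = p.1) :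
    ∑ p ∈ F, (∑ i, if ψ i = p.1 then b i else 0) = ∑ i, b i := by
  rw [Finset.sum_comm]
  refine Finset.sum_congr rfl fun i _ => ?_
  obtain ⟨p, hp, hip⟩ := hcov i
  simp only [hip]
  exact sum_centers_ite hdisj hp (fun _ => b i)

set_option maxHeartbeats 1000000 in
private lemma step_lemma (hF : F.Nonempty)
    (hne : ∀ p ∈ F, p.2.Nonempty)
    (hdisj : ∀ p ∈ F, ∀ q ∈ F, p ≠ q → ∀ v : V, (v = p.1 ∨ v ∈ p.2) → ¬(v = q.1 ∨ v ∈ q.2))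
    (L C : V → ℝ) (T1 T2 a0 a1 : ℝ) (ha0 : 0 ≤ a0) (ha1 : 0 ≤ a1)
    (hL : ∑ p ∈ F, ∑ v ∈ p.2, L v = T1)
    (hC : ∑ p ∈ F, C p.1 = T2) :
    ∃ p₀ ∈ F, ∃ v₀ ∈ p₀.2,
      (∑ p ∈ F, ∑ v ∈ p.2,
          ((L v + (if v₀ = v then a0 else 0)) - (T1 + a0) / (forkSize F : ℝ))^2)
      + (∑ p ∈ F,
          ((C p.1 + (if p₀.1 = p.1 then a1 else 0))
            - (p.2.card : ℝ) * (T2 + a1) / (forkSize F : ℝ))^2 / (p.2.card : ℝ))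
      ≤ (∑ p ∈ F, ∑ v ∈ p.2, (L v - T1 / (forkSize F : ℝ))^2)
        + (∑ p ∈ F, (C p.1 - (p.2.card : ℝ) * T2 / (forkSize F : ℝ))^2 / (p.2.card : ℝ))
        + 2 * (a0^2 + a1^2) := by
  set f : ℝ := (forkSize F : ℝ) with hfdef
  have hf1 : (1:ℝ) ≤ f := by
    obtain ⟨p, hp⟩ := hF
    have h1 : 1 ≤ forkSize F := by
      calc 1 ≤ p.2.card := Finset.card_pos.2 (hne p hp)
        _ ≤ forkSize F := Finset.single_le_sum (f := fun q => q.2.card)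
              (fun q _ => Nat.zero_le _) hp
    rw [hfdef]
    exact_mod_cast h1
  have hf0 : f ≠ 0 := by linarith
  have hfpos : (0:ℝ) < f := by linarith
  have hw1 : ∀ p ∈ F, (1:ℝ) ≤ (p.2.card : ℝ) := by
    intro p hp
    exact_mod_cast Finset.card_pos.2 (hne p hp)
  have hw0 : ∀ p ∈ F, (p.2.card : ℝ) ≠ 0 := fun p hp => by
    have := hw1 p hp; linarith
  have hsumw : ∑ p ∈ F, (p.2.card : ℝ) = f := by
    rw [hfdef]
    unfold forkSize
    push_cast
    rfl
  have hD0 : ∑ p ∈ F, ∑ v ∈ p.2, (L v - T1 / f) = 0 := by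
    have h1 : ∀ p ∈ F, (∑ v ∈ p.2, (L v - T1 / f))
        = (∑ v ∈ p.2, L v) - (p.2.card : ℝ) * (T1 / f) := by
      intro p _
      rw [Finset.sum_sub_distrib, Finset.sum_const, nsmul_eq_mul]
    rw [Finset.sum_congr rfl h1, Finset.sum_sub_distrib, hL, ← Finset.sum_mul, hsumw,
      mul_div_cancel₀ _ hf0, sub_self]
  have hE0 : ∑ p ∈ F, (C p.1 - (p.2.card : ℝ) * T2 / f) = 0 := by
    have h1 : ∀ p ∈ F, (C p.1 - (p.2.card : ℝ) * T2 / f)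
        = C p.1 - (p.2.card : ℝ) * (T2 / f) := by
      intro p _; ring
    rw [Finset.sum_congr rfl h1, Finset.sum_sub_distrib, hC, ← Finset.sum_mul, hsumw,
      mul_div_cancel₀ _ hf0, sub_self]
  classical
  set g : (Σ _ : V × Finset V, V) → ℝ := fun q =>
    2 * a0 * (L q.2 - T1 / f)
      + 2 * a1 * ((C q.1.1 - (q.1.2.card : ℝ) * T2 / f) / (q.1.2.card : ℝ)) with hgdef
  have hσne : (F.sigma fun p => p.2).Nonempty := by
    obtain ⟨p, hp⟩ := hF
    obtain ⟨v, hv⟩ := hne p hp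
    exact ⟨⟨p, v⟩, Finset.mem_sigma.2 ⟨hp, hv⟩⟩
  have hgsum : ∑ q ∈ F.sigma (fun p => p.2), g q = 0 := by
    rw [Finset.sum_sigma]
    have h1 : ∀ p ∈ F, (∑ v ∈ p.2, g ⟨p, v⟩)
        = (∑ v ∈ p.2, 2 * a0 * (L v - T1 / f))
          + 2 * a1 * (C p.1 - (p.2.card : ℝ) * T2 / f) := by
      intro p hp
      rw [hgdef]
      simp only
      rw [Finset.sum_add_distrib]
      congr 1
      rw [Finset.sum_const, nsmul_eq_mul]
      exact fid0 _ _ _ (hw0 p hp)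
    rw [Finset.sum_congr rfl h1, Finset.sum_add_distrib]
    have h2 : ∑ p ∈ F, ∑ v ∈ p.2, 2 * a0 * (L v - T1 / f)
        = 2 * a0 * ∑ p ∈ F, ∑ v ∈ p.2, (L v - T1 / f) := by
      rw [Finset.mul_sum]
      exact Finset.sum_congr rfl fun p _ => (Finset.mul_sum _ _ _).symm
    have h3 : ∑ p ∈ F, 2 * a1 * (C p.1 - (p.2.card : ℝ) * T2 / f)
        = 2 * a1 * ∑ p ∈ F, (C p.1 - (p.2.card : ℝ) * T2 / f) := (Finset.mul_sum _ _ _).symm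
    rw [h2, h3, hD0, hE0]
    ring
  obtain ⟨q₀, hq₀, hmin⟩ := Finset.exists_min_image (F.sigma fun p => p.2) g hσne
  have hg0 : g q₀ ≤ 0 := by
    obtain ⟨q, hq, hgq⟩ := Finset.exists_le_of_sum_le hσne
      (by rw [hgsum, Finset.sum_const, smul_zero] :
        ∑ q ∈ F.sigma (fun p => p.2), g q ≤ ∑ _q ∈ F.sigma (fun p => p.2), (0:ℝ))
    exact le_trans (hmin q hq) hgq
  have hp₀ : q₀.1 ∈ F := (Finset.mem_sigma.1 hq₀).1
  have hv₀ : q₀.2 ∈ q₀.1.2 := (Finset.mem_sigma.1 hq₀).2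
  refine ⟨q₀.1, hp₀, q₀.2, hv₀, ?_⟩
  have hwq : (1:ℝ) ≤ (q₀.1.2.card : ℝ) := hw1 _ hp₀
  have hwq0 : (q₀.1.2.card : ℝ) ≠ 0 := hw0 _ hp₀
  -- prong part
  have hA : (∑ p ∈ F, ∑ v ∈ p.2,
        ((L v + (if q₀.2 = v then a0 else 0)) - (T1 + a0) / f)^2)
      = (∑ p ∈ F, ∑ v ∈ p.2, (L v - T1 / f)^2)
        + (∑ p ∈ F, ∑ v ∈ p.2,
            2 * (L v - T1 / f) * ((if q₀.2 = v then a0 else 0) - a0 / f))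
        + (∑ p ∈ F, ∑ v ∈ p.2, ((if q₀.2 = v then a0 else 0) - a0 / f)^2) := by
    rw [← Finset.sum_add_distrib, ← Finset.sum_add_distrib]
    refine Finset.sum_congr rfl fun p hp => ?_
    rw [← Finset.sum_add_distrib, ← Finset.sum_add_distrib]
    refine Finset.sum_congr rfl fun v hv => ?_
    ring
  have hlin1 : (∑ p ∈ F, ∑ v ∈ p.2,
        2 * (L v - T1 / f) * ((if q₀.2 = v then a0 else 0) - a0 / f))
      = 2 * a0 * (L q₀.2 - T1 / f) := by
    have h1 : ∀ v : V, 2 * (L v - T1 / f) * ((if q₀.2 = v then a0 else 0) - a0 / f)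
        = (if q₀.2 = v then 2 * (L v - T1 / f) * a0 else 0)
          - 2 * a0 / f * (L v - T1 / f) := by
      intro v
      by_cases h : q₀.2 = v
      · rw [if_pos h, if_pos h]; ring
      · rw [if_neg h, if_neg h]; ring
    simp only [h1]
    rw [Finset.sum_congr rfl (fun p _ => Finset.sum_sub_distrib _ _), Finset.sum_sub_distrib]
    rw [sum_prongs_ite hdisj hp₀ hv₀ (fun v => 2 * (L v - T1 / f) * a0)]
    have h2 : ∑ p ∈ F, ∑ v ∈ p.2, 2 * a0 / f * (L v - T1 / f)
        = 2 * a0 / f * ∑ p ∈ F, ∑ v ∈ p.2, (L v - T1 / f) := by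
      rw [Finset.mul_sum]
      exact Finset.sum_congr rfl fun p _ => (Finset.mul_sum _ _ _).symm
    rw [h2, hD0, mul_zero, sub_zero]
    ring
  have hsq1 : (∑ p ∈ F, ∑ v ∈ p.2, ((if q₀.2 = v then a0 else 0) - a0 / f)^2)
      ≤ 2 * a0^2 := by
    have haf : 0 ≤ a0 / f := div_nonneg ha0 (le_of_lt hfpos)
    have hptw : ∀ v : V, ((if q₀.2 = v then a0 else 0) - a0 / f)^2
        ≤ (if q₀.2 = v then a0^2 else 0) + (a0 / f)^2 := by
      intro v
      by_cases h : q₀.2 = v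
      · rw [if_pos h, if_pos h]
        nlinarith [mul_nonneg ha0 haf]
      · rw [if_neg h, if_neg h, zero_sub, zero_add, neg_sq]
    calc (∑ p ∈ F, ∑ v ∈ p.2, ((if q₀.2 = v then a0 else 0) - a0 / f)^2)
        ≤ ∑ p ∈ F, ∑ v ∈ p.2, ((if q₀.2 = v then a0^2 else 0) + (a0 / f)^2) :=
          Finset.sum_le_sum fun p _ => Finset.sum_le_sum fun v _ => hptw v
      _ = a0^2 + f * (a0 / f)^2 := by
          rw [Finset.sum_congr rfl (fun p _ => Finset.sum_add_distrib), Finset.sum_add_distrib]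
          rw [sum_prongs_ite hdisj hp₀ hv₀ (fun _ => a0^2)]
          congr 1
          have h3 : ∀ p ∈ F, (∑ _v ∈ p.2, (a0 / f)^2) = (p.2.card : ℝ) * (a0 / f)^2 := by
            intro p _
            rw [Finset.sum_const, nsmul_eq_mul]
          rw [Finset.sum_congr rfl h3, ← Finset.sum_mul, hsumw]
      _ ≤ 2 * a0^2 := by
          rw [fid3 _ _ hf0]
          have := div_le_self (sq_nonneg a0) hf1
          nlinarith
  -- center part
  have hB : (∑ p ∈ F,
        ((C p.1 + (if q₀.1.1 = p.1 then a1 else 0))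
          - (p.2.card : ℝ) * (T2 + a1) / f)^2 / (p.2.card : ℝ))
      = (∑ p ∈ F, (C p.1 - (p.2.card : ℝ) * T2 / f)^2 / (p.2.card : ℝ))
        + (∑ p ∈ F, 2 * (C p.1 - (p.2.card : ℝ) * T2 / f)
            * ((if q₀.1.1 = p.1 then a1 else 0) - (p.2.card : ℝ) * a1 / f) / (p.2.card : ℝ))
        + (∑ p ∈ F,
            ((if q₀.1.1 = p.1 then a1 else 0) - (p.2.card : ℝ) * a1 / f)^2 / (p.2.card : ℝ)) := by
    rw [← Finset.sum_add_distrib, ← Finset.sum_add_distrib]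
    refine Finset.sum_congr rfl fun p hp => ?_
    ring
  have hlin2 : (∑ p ∈ F, 2 * (C p.1 - (p.2.card : ℝ) * T2 / f)
        * ((if q₀.1.1 = p.1 then a1 else 0) - (p.2.card : ℝ) * a1 / f) / (p.2.card : ℝ))
      = 2 * a1 * ((C q₀.1.1 - (q₀.1.2.card : ℝ) * T2 / f) / (q₀.1.2.card : ℝ)) := by
    have h1 : ∀ p ∈ F, 2 * (C p.1 - (p.2.card : ℝ) * T2 / f)
          * ((if q₀.1.1 = p.1 then a1 else 0) - (p.2.card : ℝ) * a1 / f) / (p.2.card : ℝ)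
        = (if q₀.1.1 = p.1 then
            2 * (C p.1 - (p.2.card : ℝ) * T2 / f) * a1 / (p.2.card : ℝ) else 0)
          - 2 * a1 / f * (C p.1 - (p.2.card : ℝ) * T2 / f) := by
      intro p hp
      have hwp := hw0 p hp
      by_cases h : q₀.1.1 = p.1
      · rw [if_pos h, if_pos h]
        exact fid1 _ _ _ _ hwp hf0
      · rw [if_neg h, if_neg h]
        rw [fid2 _ _ _ _ hwp hf0, zero_sub]
    rw [Finset.sum_congr rfl h1, Finset.sum_sub_distrib]
    rw [sum_centers_ite hdisj hp₀
      (fun p => 2 * (C p.1 - (p.2.card : ℝ) * T2 / f) * a1 / (p.2.card : ℝ))]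
    rw [← Finset.mul_sum, hE0, mul_zero, sub_zero]
    ring
  have hsq2 : (∑ p ∈ F,
        ((if q₀.1.1 = p.1 then a1 else 0) - (p.2.card : ℝ) * a1 / f)^2 / (p.2.card : ℝ))
      ≤ 2 * a1^2 := by
    have haf : 0 ≤ a1 / f := div_nonneg ha1 (le_of_lt hfpos)
    have hptw : ∀ p ∈ F,
        ((if q₀.1.1 = p.1 then a1 else 0) - (p.2.card : ℝ) * a1 / f)^2 / (p.2.card : ℝ)
        ≤ (if q₀.1.1 = p.1 then a1^2 / (p.2.card : ℝ) else 0)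
          + (p.2.card : ℝ) * (a1 / f)^2 := by
      intro p hp
      have hwp1 := hw1 p hp
      have hwp : (0:ℝ) < (p.2.card : ℝ) := by linarith
      by_cases h : q₀.1.1 = p.1
      · rw [if_pos h, if_pos h]
        have hrw : (p.2.card : ℝ) * a1 / f = (p.2.card : ℝ) * (a1 / f) := by ring
        rw [hrw]
        have key : (a1 - (p.2.card : ℝ) * (a1 / f))^2
            ≤ a1^2 + ((p.2.card : ℝ) * (a1 / f))^2 := by
          nlinarith [mul_nonneg (mul_nonneg (le_of_lt hwp) haf) ha1]
        calc (a1 - (p.2.card : ℝ) * (a1 / f))^2 / (p.2.card : ℝ)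
            ≤ (a1^2 + ((p.2.card : ℝ) * (a1 / f))^2) / (p.2.card : ℝ) := by gcongr
          _ = a1^2 / (p.2.card : ℝ) + (p.2.card : ℝ) * (a1 / f)^2 :=
              fid5 _ _ _ (ne_of_gt hwp)
      · rw [if_neg h, if_neg h, zero_add]
        exact le_of_eq (fid6 _ _ _ (ne_of_gt hwp) hf0)
    calc (∑ p ∈ F,
          ((if q₀.1.1 = p.1 then a1 else 0) - (p.2.card : ℝ) * a1 / f)^2 / (p.2.card : ℝ))
        ≤ ∑ p ∈ F, ((if q₀.1.1 = p.1 then a1^2 / (p.2.card : ℝ) else 0)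
            + (p.2.card : ℝ) * (a1 / f)^2) := Finset.sum_le_sum hptw
      _ = a1^2 / (q₀.1.2.card : ℝ) + f * (a1 / f)^2 := by
          rw [Finset.sum_add_distrib,
            sum_centers_ite hdisj hp₀ (fun p => a1^2 / (p.2.card : ℝ)),
            ← Finset.sum_mul, hsumw]
      _ ≤ 2 * a1^2 := by
          have h1 : a1^2 / (q₀.1.2.card : ℝ) ≤ a1^2 := div_le_self (sq_nonneg a1) hwq
          rw [fid3 _ _ hf0]
          have h3 := div_le_self (sq_nonneg a1) hf1
          linarith
  have hgq₀ : g q₀ = 2 * a0 * (L q₀.2 - T1 / f)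
      + 2 * a1 * ((C q₀.1.1 - (q₀.1.2.card : ℝ) * T2 / f) / (q₀.1.2.card : ℝ)) := rfl
  rw [hA, hB, hlin1, hlin2]
  rw [hgq₀] at hg0
  linarith [hsq1, hsq2]

end Helpers
section AuxInd
variable {V : Type} [DecidableEq V]

private lemma aux_ind (S : ℕ) (F : Finset (V × Finset V)) (hF : F.Nonempty)
    (hne : ∀ p ∈ F, p.2.Nonempty)
    (hdisj : ∀ p ∈ F, ∀ q ∈ F, p ≠ q → ∀ v : V, (v = p.1 ∨ v ∈ p.2) → ¬(v = q.1 ∨ v ∈ q.2)) :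
    ∀ (s : ℕ) (a : Fin s → Fin 2 → ℕ), (∀ i, a i 0 + a i 1 ≤ S) →
    ∃ φ : Fin s → Fin 2 → V,
      (∀ i, ∃ p ∈ F, φ i 1 = p.1 ∧ φ i 0 ∈ p.2) ∧
      (∑ p ∈ F, ∑ v ∈ p.2,
          ((∑ i, if φ i 0 = v then (a i 0 : ℝ) else 0)
            - (∑ i, (a i 0 : ℝ)) / (forkSize F : ℝ))^2)
      + (∑ p ∈ F,
          ((∑ i, if φ i 1 = p.1 then (a i 1 : ℝ) else 0)
            - (p.2.card : ℝ) * (∑ i, (a i 1 : ℝ)) / (forkSize F : ℝ))^2 / (p.2.card : ℝ))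
      ≤ 2 * S * (∑ i, ((a i 0 : ℝ) + (a i 1 : ℝ))) := by
  intro s
  induction s with
  | zero =>
    intro a _
    obtain ⟨p, hp⟩ := hF
    obtain ⟨v, hv⟩ := hne p hp
    refine ⟨fun i => i.elim0, fun i => i.elim0, ?_⟩
    simp
  | succ n ih =>
    intro a haS
    obtain ⟨φ', hcov', hΦ'⟩ := ih (fun i => a i.castSucc) (fun i => haS i.castSucc)
    have hLsum : ∑ p ∈ F, ∑ v ∈ p.2,
        (∑ i : Fin n, if φ' i 0 = v then (a i.castSucc 0 : ℝ) else 0)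
        = ∑ i : Fin n, (a i.castSucc 0 : ℝ) :=
      sum_load_prongs hdisj _ _ (fun i => by
        obtain ⟨p, hp, _, h2⟩ := hcov' i
        exact ⟨p, hp, h2⟩)
    have hCsum : ∑ p ∈ F,
        (∑ i : Fin n, if φ' i 1 = p.1 then (a i.castSucc 1 : ℝ) else 0)
        = ∑ i : Fin n, (a i.castSucc 1 : ℝ) :=
      sum_load_centers hdisj _ _ (fun i => by
        obtain ⟨p, hp, h1, _⟩ := hcov' i
        exact ⟨p, hp, h1⟩)
    obtain ⟨p₀, hp₀, v₀, hv₀, hstep⟩ := step_lemma hF hne hdisj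
      (fun v => ∑ i : Fin n, if φ' i 0 = v then (a i.castSucc 0 : ℝ) else 0)
      (fun c => ∑ i : Fin n, if φ' i 1 = c then (a i.castSucc 1 : ℝ) else 0)
      (∑ i : Fin n, (a i.castSucc 0 : ℝ)) (∑ i : Fin n, (a i.castSucc 1 : ℝ))
      ((a (Fin.last n) 0 : ℝ)) ((a (Fin.last n) 1 : ℝ))
      (by positivity) (by positivity) hLsum hCsum
    refine ⟨Fin.snoc φ' ![v₀, p₀.1], ?_, ?_⟩
    · intro i
      refine Fin.lastCases ?_ ?_ i
      · refine ⟨p₀, hp₀, ?_, ?_⟩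
        · simp [Fin.snoc_last]
        · simpa [Fin.snoc_last] using hv₀
      · intro j
        simpa [Fin.snoc_castSucc] using hcov' j
    · have hrw1 : ∀ v : V,
          (∑ i : Fin (n+1), if (Fin.snoc φ' ![v₀, p₀.1] : Fin (n+1) → Fin 2 → V) i 0 = v
            then (a i 0 : ℝ) else 0)
          = (∑ i : Fin n, if φ' i 0 = v then (a i.castSucc 0 : ℝ) else 0)
            + (if v₀ = v then (a (Fin.last n) 0 : ℝ) else 0) := by
        intro v
        rw [Fin.sum_univ_castSucc]
        simp [Fin.snoc_castSucc, Fin.snoc_last]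
      have hrw2 : ∀ c : V,
          (∑ i : Fin (n+1), if (Fin.snoc φ' ![v₀, p₀.1] : Fin (n+1) → Fin 2 → V) i 1 = c
            then (a i 1 : ℝ) else 0)
          = (∑ i : Fin n, if φ' i 1 = c then (a i.castSucc 1 : ℝ) else 0)
            + (if p₀.1 = c then (a (Fin.last n) 1 : ℝ) else 0) := by
        intro c
        rw [Fin.sum_univ_castSucc]
        simp [Fin.snoc_castSucc, Fin.snoc_last]
      have hrwT1 : (∑ i : Fin (n+1), (a i 0 : ℝ))
          = (∑ i : Fin n, (a i.castSucc 0 : ℝ)) + (a (Fin.last n) 0 : ℝ) :=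
        Fin.sum_univ_castSucc _
      have hrwT2 : (∑ i : Fin (n+1), (a i 1 : ℝ))
          = (∑ i : Fin n, (a i.castSucc 1 : ℝ)) + (a (Fin.last n) 1 : ℝ) :=
        Fin.sum_univ_castSucc _
      have hrwS : (∑ i : Fin (n+1), ((a i 0 : ℝ) + (a i 1 : ℝ)))
          = (∑ i : Fin n, ((a i.castSucc 0 : ℝ) + (a i.castSucc 1 : ℝ)))
            + ((a (Fin.last n) 0 : ℝ) + (a (Fin.last n) 1 : ℝ)) :=
        Fin.sum_univ_castSucc _
      simp only [hrw1, hrw2, hrwT1, hrwT2, hrwS]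
      have ha0S : (a (Fin.last n) 0 : ℝ) ≤ (S : ℝ) := by
        have := haS (Fin.last n)
        have h0 : a (Fin.last n) 0 ≤ S := le_trans (Nat.le_add_right _ _) this
        exact_mod_cast h0
      have ha1S : (a (Fin.last n) 1 : ℝ) ≤ (S : ℝ) := by
        have := haS (Fin.last n)
        have h0 : a (Fin.last n) 1 ≤ S := le_trans (Nat.le_add_left _ _) this
        exact_mod_cast h0
      have ha0 : (0:ℝ) ≤ (a (Fin.last n) 0 : ℝ) := by positivity
      have ha1 : (0:ℝ) ≤ (a (Fin.last n) 1 : ℝ) := by positivity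
      have hmul : 2 * ((a (Fin.last n) 0 : ℝ)^2 + (a (Fin.last n) 1 : ℝ)^2)
          ≤ 2 * (S:ℝ) * ((a (Fin.last n) 0 : ℝ) + (a (Fin.last n) 1 : ℝ)) := by
        nlinarith
      calc _ ≤ _ := hstep
        _ ≤ 2 * (S:ℝ) * (∑ i : Fin n, ((a i.castSucc 0 : ℝ) + (a i.castSucc 1 : ℝ)))
            + 2 * ((a (Fin.last n) 0 : ℝ)^2 + (a (Fin.last n) 1 : ℝ)^2) := by
            linarith [hΦ']
        _ ≤ _ := by
            rw [mul_add]
            linarith [hmul]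

end AuxInd

set_option maxHeartbeats 1000000

/-- Lemma 5.3. Distribution of weights over a nonempty fork system of
ratio at most `r`, respecting its center–prong edges, with prongs receiving at most
`t₁/|F| + √(12tS|F|)` and centers at most `r·t₂/|F| + √(12tS|F|)`. -/
theorem stmt9 {V : Type} [DecidableEq V] (s t₁ t₂ S r : ℕ) (a : Fin s → Fin 2 → ℕ)
    (hsum1 : (∑ i, a i 0) ≤ t₁) (hsum2 : (∑ i, a i 1) ≤ t₂)
    (hSt : S ≤ t₁ + t₂) (haS : ∀ i, a i 0 + a i 1 ≤ S)
    (F : Finset (V × Finset V)) (hF : F.Nonempty)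
    (hfork : ∀ p ∈ F, p.2.Nonempty ∧ p.1 ∉ p.2 ∧ p.2.card ≤ r)
    (hdisj : ∀ p ∈ F, ∀ q ∈ F, p ≠ q → ∀ v : V, (v = p.1 ∨ v ∈ p.2) → ¬(v = q.1 ∨ v ∈ q.2))
    (hV12 : (F.image fun p => p.1).card ≤ (F.biUnion fun p => p.2).card) :
    ∃ φ : Fin s → Fin 2 → V,
      (∀ i, ∃ p ∈ F, φ i 1 = p.1 ∧ φ i 0 ∈ p.2) ∧
      (∀ v₁ ∈ F.biUnion fun p => p.2,
        ((∑ i, if φ i 0 = v₁ then a i 0 else 0 : ℕ) : ℝ)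
          ≤ (t₁ : ℝ) / forkSize F + Real.sqrt (12 * (t₁ + t₂) * S * forkSize F)) ∧
      (∀ v₂ ∈ F.image fun p => p.1,
        ((∑ i, if φ i 1 = v₂ then a i 1 else 0 : ℕ) : ℝ)
          ≤ (r : ℝ) * t₂ / forkSize F + Real.sqrt (12 * (t₁ + t₂) * S * forkSize F)) := by
  have hne : ∀ p ∈ F, p.2.Nonempty := fun p hp => (hfork p hp).1
  obtain ⟨φ, hcov, hΦ⟩ := aux_ind S F hF hne hdisj s a haS
  set f : ℝ := (forkSize F : ℝ) with hfdef
  have hf1 : (1:ℝ) ≤ f := by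
    obtain ⟨p, hp⟩ := hF
    have h1 : 1 ≤ forkSize F := by
      calc 1 ≤ p.2.card := Finset.card_pos.2 (hne p hp)
        _ ≤ forkSize F := Finset.single_le_sum (f := fun q => q.2.card)
              (fun q _ => Nat.zero_le _) hp
    rw [hfdef]
    exact_mod_cast h1
  have hfpos : (0:ℝ) < f := by linarith
  have hT1 : (∑ i, (a i 0 : ℝ)) ≤ (t₁ : ℝ) := by
    rw [← Nat.cast_sum]
    exact_mod_cast hsum1
  have hT2 : (∑ i, (a i 1 : ℝ)) ≤ (t₂ : ℝ) := by
    rw [← Nat.cast_sum]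
    exact_mod_cast hsum2
  have hT1nn : (0:ℝ) ≤ ∑ i, (a i 0 : ℝ) := by positivity
  have hT2nn : (0:ℝ) ≤ ∑ i, (a i 1 : ℝ) := by positivity
  have hSnn : (0:ℝ) ≤ (S : ℝ) := by positivity
  have ht12 : (0:ℝ) ≤ (t₁ : ℝ) + (t₂ : ℝ) := by positivity
  have hTt : (∑ i, ((a i 0 : ℝ) + (a i 1 : ℝ))) ≤ (t₁ : ℝ) + (t₂ : ℝ) := by
    rw [Finset.sum_add_distrib]
    linarith
  have hTtnn : (0:ℝ) ≤ ∑ i, ((a i 0 : ℝ) + (a i 1 : ℝ)) := by positivity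
  have hΦ2 : (∑ p ∈ F, ∑ v ∈ p.2,
        ((∑ i, if φ i 0 = v then (a i 0 : ℝ) else 0)
          - (∑ i, (a i 0 : ℝ)) / f)^2)
      + (∑ p ∈ F,
        ((∑ i, if φ i 1 = p.1 then (a i 1 : ℝ) else 0)
          - (p.2.card : ℝ) * (∑ i, (a i 1 : ℝ)) / f)^2 / (p.2.card : ℝ))
      ≤ 2 * (S:ℝ) * ((t₁ : ℝ) + (t₂ : ℝ)) := by
    refine le_trans hΦ ?_
    nlinarith
  have hAnn : (0:ℝ) ≤ ∑ p ∈ F, ∑ v ∈ p.2,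
      ((∑ i, if φ i 0 = v then (a i 0 : ℝ) else 0)
        - (∑ i, (a i 0 : ℝ)) / f)^2 :=
    Finset.sum_nonneg fun p _ => Finset.sum_nonneg fun v _ => sq_nonneg _
  have hBnn : (0:ℝ) ≤ ∑ p ∈ F,
      ((∑ i, if φ i 1 = p.1 then (a i 1 : ℝ) else 0)
        - (p.2.card : ℝ) * (∑ i, (a i 1 : ℝ)) / f)^2 / (p.2.card : ℝ) :=
    Finset.sum_nonneg fun p _ => div_nonneg (sq_nonneg _) (by positivity)
  have hsqrt : Real.sqrt (2 * (S:ℝ) * ((t₁:ℝ) + (t₂:ℝ)) * f)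
      ≤ Real.sqrt (12 * ((t₁:ℝ) + (t₂:ℝ)) * (S:ℝ) * f) := by
    apply Real.sqrt_le_sqrt
    nlinarith [mul_nonneg (mul_nonneg hSnn ht12) (le_of_lt hfpos)]
  refine ⟨φ, hcov, ?_, ?_⟩
  · intro v₁ hv₁
    obtain ⟨p, hp, hv⟩ := Finset.mem_biUnion.1 hv₁
    have hterm : ((∑ i, if φ i 0 = v₁ then (a i 0 : ℝ) else 0)
        - (∑ i, (a i 0 : ℝ)) / f)^2 ≤ 2 * (S:ℝ) * ((t₁:ℝ) + (t₂:ℝ)) := by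
      calc ((∑ i, if φ i 0 = v₁ then (a i 0 : ℝ) else 0)
            - (∑ i, (a i 0 : ℝ)) / f)^2
          ≤ ∑ v ∈ p.2, ((∑ i, if φ i 0 = v then (a i 0 : ℝ) else 0)
              - (∑ i, (a i 0 : ℝ)) / f)^2 :=
            Finset.single_le_sum
              (f := fun v => ((∑ i, if φ i 0 = v then (a i 0 : ℝ) else 0)
                - (∑ i, (a i 0 : ℝ)) / f)^2)
              (fun v _ => sq_nonneg _) hv
        _ ≤ ∑ p ∈ F, ∑ v ∈ p.2, ((∑ i, if φ i 0 = v then (a i 0 : ℝ) else 0)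
              - (∑ i, (a i 0 : ℝ)) / f)^2 :=
            Finset.single_le_sum
              (f := fun q => ∑ v ∈ q.2, ((∑ i, if φ i 0 = v then (a i 0 : ℝ) else 0)
                - (∑ i, (a i 0 : ℝ)) / f)^2)
              (fun q _ => Finset.sum_nonneg fun v _ => sq_nonneg _) hp
        _ ≤ _ := le_trans (le_add_of_nonneg_right hBnn) hΦ2
    have h2 : (∑ i, if φ i 0 = v₁ then (a i 0 : ℝ) else 0) - (∑ i, (a i 0 : ℝ)) / f
        ≤ Real.sqrt (2 * (S:ℝ) * ((t₁:ℝ) + (t₂:ℝ)) * f) := by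
      calc (∑ i, if φ i 0 = v₁ then (a i 0 : ℝ) else 0) - (∑ i, (a i 0 : ℝ)) / f
          ≤ |(∑ i, if φ i 0 = v₁ then (a i 0 : ℝ) else 0) - (∑ i, (a i 0 : ℝ)) / f| :=
            le_abs_self _
        _ = Real.sqrt (((∑ i, if φ i 0 = v₁ then (a i 0 : ℝ) else 0)
              - (∑ i, (a i 0 : ℝ)) / f)^2) := (Real.sqrt_sq_eq_abs _).symm
        _ ≤ Real.sqrt (2 * (S:ℝ) * ((t₁:ℝ) + (t₂:ℝ)) * f) := by
            apply Real.sqrt_le_sqrt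
            nlinarith [mul_nonneg (mul_nonneg hSnn ht12) (le_of_lt hfpos)]
    have h4 : (∑ i, (a i 0 : ℝ)) / f ≤ (t₁ : ℝ) / f := by gcongr
    push_cast
    linarith [hsqrt]
  · intro v₂ hv₂
    obtain ⟨p, hp, hpv⟩ := Finset.mem_image.1 hv₂
    subst hpv
    have hwpos : (0:ℝ) < (p.2.card : ℝ) := by
      have h1 : 0 < p.2.card := Finset.card_pos.2 (hne p hp)
      exact_mod_cast h1
    have hwf : (p.2.card : ℝ) ≤ f := by
      rw [hfdef]
      have h1 : p.2.card ≤ forkSize F :=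
        Finset.single_le_sum (f := fun q => q.2.card) (fun q _ => Nat.zero_le _) hp
      exact_mod_cast h1
    have hwr : (p.2.card : ℝ) ≤ (r : ℝ) := by exact_mod_cast (hfork p hp).2.2
    have hterm : ((∑ i, if φ i 1 = p.1 then (a i 1 : ℝ) else 0)
        - (p.2.card : ℝ) * (∑ i, (a i 1 : ℝ)) / f)^2 / (p.2.card : ℝ)
        ≤ 2 * (S:ℝ) * ((t₁:ℝ) + (t₂:ℝ)) := by
      calc ((∑ i, if φ i 1 = p.1 then (a i 1 : ℝ) else 0)
            - (p.2.card : ℝ) * (∑ i, (a i 1 : ℝ)) / f)^2 / (p.2.card : ℝ)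
          ≤ ∑ p ∈ F, ((∑ i, if φ i 1 = p.1 then (a i 1 : ℝ) else 0)
              - (p.2.card : ℝ) * (∑ i, (a i 1 : ℝ)) / f)^2 / (p.2.card : ℝ) :=
            Finset.single_le_sum
              (f := fun q => ((∑ i, if φ i 1 = q.1 then (a i 1 : ℝ) else 0)
                - (q.2.card : ℝ) * (∑ i, (a i 1 : ℝ)) / f)^2 / (q.2.card : ℝ))
              (fun q _ => div_nonneg (sq_nonneg _) (by positivity)) hp
        _ ≤ _ := le_trans (le_add_of_nonneg_left hAnn) hΦ2
    have hterm2 : ((∑ i, if φ i 1 = p.1 then (a i 1 : ℝ) else 0)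
        - (p.2.card : ℝ) * (∑ i, (a i 1 : ℝ)) / f)^2
        ≤ 2 * (S:ℝ) * ((t₁:ℝ) + (t₂:ℝ)) * (p.2.card : ℝ) :=
      (div_le_iff₀ hwpos).1 hterm
    have h2 : (∑ i, if φ i 1 = p.1 then (a i 1 : ℝ) else 0)
        - (p.2.card : ℝ) * (∑ i, (a i 1 : ℝ)) / f
        ≤ Real.sqrt (2 * (S:ℝ) * ((t₁:ℝ) + (t₂:ℝ)) * f) := by
      calc (∑ i, if φ i 1 = p.1 then (a i 1 : ℝ) else 0)
            - (p.2.card : ℝ) * (∑ i, (a i 1 : ℝ)) / f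
          ≤ |(∑ i, if φ i 1 = p.1 then (a i 1 : ℝ) else 0)
              - (p.2.card : ℝ) * (∑ i, (a i 1 : ℝ)) / f| := le_abs_self _
        _ = Real.sqrt (((∑ i, if φ i 1 = p.1 then (a i 1 : ℝ) else 0)
              - (p.2.card : ℝ) * (∑ i, (a i 1 : ℝ)) / f)^2) :=
            (Real.sqrt_sq_eq_abs _).symm
        _ ≤ Real.sqrt (2 * (S:ℝ) * ((t₁:ℝ) + (t₂:ℝ)) * f) := by
            apply Real.sqrt_le_sqrt
            nlinarith [mul_nonneg (mul_nonneg hSnn ht12) hwpos.le]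
    have h4 : (p.2.card : ℝ) * (∑ i, (a i 1 : ℝ)) / f ≤ (r : ℝ) * (t₂ : ℝ) / f := by
      have hnum : (p.2.card : ℝ) * (∑ i, (a i 1 : ℝ)) ≤ (r : ℝ) * (t₂ : ℝ) :=
        mul_le_mul hwr hT2 hT2nn (by positivity)
      gcongr
    push_cast
    linarith [hsqrt]
end

section
/- Let K ∈ 𝒦ηₙ have partition classes A, B, C and let A' ⊆ A, B' ⊆ B, C' ⊆ C. If |A'| > 2ηn, |B'| > 2ηn and |C'| > 2ηn, then K contains a triangle with one vertex in each of A', B', C'. -/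
open SimpleGraph

lemma fin3_third : ∀ i j x k : Fin 3, j ≠ i → k ≠ i → k ≠ j → x ≠ i → x ≠ j → x = k := by
  intro i j x k h1 h2 h3 h4 h5
  have ib := i.isLt; have jb := j.isLt; have xb := x.isLt; have kb := k.isLt
  simp only [ne_eq, Fin.ext_iff] at *
  omega

lemma fin3_exists : ∀ i j : Fin 3, j ≠ i → ∃ k : Fin 3, k ≠ i ∧ k ≠ j := by
  intro i j h
  fin_cases i <;> fin_cases j <;>
    first | exact absurd rfl h | exact ⟨0, by decide⟩ | exact ⟨1, by decide⟩ | exact ⟨2, by decide⟩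

lemma fin3_10 : (1 : Fin 3) ≠ 0 := by decide
lemma fin3_20 : (2 : Fin 3) ≠ 0 := by decide
lemma fin3_21 : (2 : Fin 3) ≠ 1 := by decide

/-- Proposition 6.3(c). If `|A'|,|B'|,|C'| > 2ηn` then `K` contains a
triangle with one vertex in each of `A'`, `B'`, `C'`. -/
theorem stmt16 (n : ℕ) (η : ℝ) (K : SimpleGraph (TriV n)) (hK : KK n η K)
    (A' B' C' : Finset (TriV n))
    (hA : ∀ v ∈ A', v.1 = 0) (hB : ∀ v ∈ B', v.1 = 1) (hC : ∀ v ∈ C', v.1 = 2)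
    (hcardA : 2 * η * n < (A'.card : ℝ)) (hcardB : 2 * η * n < (B'.card : ℝ))
    (hcardC : 2 * η * n < (C'.card : ℝ)) :
    ∃ a ∈ A', ∃ b ∈ B', ∃ c ∈ C', K.Adj a b ∧ K.Adj b c ∧ K.Adj a c := by

  classical
  letI : DecidableRel K.Adj := Classical.decRel _
  -- n is positive
  have hn : 0 < n := by
    rcases Nat.eq_zero_or_pos n with h | h
    · subst h
      have h1 : (0 : ℝ) < (A'.card : ℝ) := by simpa using hcardA
      have h2 : 0 < A'.card := by exact_mod_cast h1
      obtain ⟨a, _⟩ := Finset.card_pos.mp h2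
      exact a.2.elim0
    · exact h
  set N : TriV n → Finset (TriV n) := fun v => K.neighborFinset v with hN
  have hmemN : ∀ v u : TriV n, u ∈ N v ↔ K.Adj v u := by
    intro v u; simp [hN, SimpleGraph.mem_neighborFinset]
  have hne : ∀ {v u : TriV n}, K.Adj v u → v.1 ≠ u.1 := by
    intro v u h
    exact (hK.1 h)
  -- degree bound in Finset form
  have hdeg : ∀ v : TriV n, (2 - η) * n < ((N v).card : ℝ) := by
    intro v
    have := hK.2 v
    have he : ({u | K.Adj v u} : Set (TriV n)).ncard = (N v).card := by
      have : ({u | K.Adj v u} : Set (TriV n)) = ↑(N v) := by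
        ext u; simp [hmemN]
      rw [this, Set.ncard_coe_finset]
    rwa [he] at this
  -- the classes
  set C : Fin 3 → Finset (TriV n) := fun i => Finset.univ.filter (fun u => u.1 = i) with hCls
  have hmemC : ∀ (i : Fin 3) (u : TriV n), u ∈ C i ↔ u.1 = i := by
    intro i u; simp [hCls]
  have hCcard : ∀ i : Fin 3, (C i).card = n := by
    intro i
    have : C i = Finset.univ.image (fun x : Fin n => (⟨i, x⟩ : TriV n)) := by
      ext u
      obtain ⟨u1, u2⟩ := u
      simp only [hmemC, Finset.mem_image, Finset.mem_univ, true_and]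
      constructor
      · rintro rfl; exact ⟨u2, rfl⟩
      · rintro ⟨x, hx⟩
        cases hx; rfl
    rw [this, Finset.card_image_of_injective _ (fun x y hxy => by
      simpa using congrArg Sigma.snd hxy), Finset.card_univ, Fintype.card_fin]
  -- missing-degree bound: few non-neighbours in each other class
  have hmiss : ∀ (v : TriV n) (j : Fin 3), j ≠ v.1 →
      (((C j \ N v).card : ℝ)) < η * n := by
    intro v j hj
    obtain ⟨k, hk1, hk2⟩ := fin3_exists v.1 j hj
    have hsub : N v \ C j ⊆ C k := by
      intro u hu
      rw [Finset.mem_sdiff] at hu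
      rw [hmemC]
      have h1 : u.1 ≠ v.1 := fun h => (hne ((hmemN v u).1 hu.1)) h.symm
      have h2 : u.1 ≠ j := fun h => hu.2 ((hmemC j u).2 h)
      exact fin3_third v.1 j u.1 k hj hk1 hk2 h1 h2
    have h1 : (N v \ C j).card ≤ n := by
      calc (N v \ C j).card ≤ (C k).card := Finset.card_le_card hsub
        _ = n := hCcard k
    have h2 : (N v ∩ C j).card + (N v \ C j).card = (N v).card :=
      Finset.card_inter_add_card_sdiff _ _
    have h3 : (C j ∩ N v).card + (C j \ N v).card = (C j).card :=
      Finset.card_inter_add_card_sdiff _ _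
    have h4 : (C j ∩ N v).card = (N v ∩ C j).card := by rw [Finset.inter_comm]
    have h5 := hdeg v
    have h6 := hCcard j
    have h1' : ((N v \ C j).card : ℝ) ≤ n := by exact_mod_cast h1
    have h2' : ((N v ∩ C j).card : ℝ) + ((N v \ C j).card : ℝ) = ((N v).card : ℝ) := by
      exact_mod_cast h2
    have h3' : ((C j ∩ N v).card : ℝ) + ((C j \ N v).card : ℝ) = (n : ℝ) := by
      rw [h6] at h3; exact_mod_cast h3
    have h4' : ((C j ∩ N v).card : ℝ) = ((N v ∩ C j).card : ℝ) := by exact_mod_cast h4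
    nlinarith [h5, h1', h2', h3', h4']
  -- η * n is positive
  have hηn : 0 < η * n := by
    have := hmiss ⟨0, ⟨0, hn⟩⟩ 1 fin3_10
    have h0 : (0 : ℝ) ≤ (((C 1 \ N ⟨0, ⟨0, hn⟩⟩).card : ℝ)) := by positivity
    linarith
  -- choose a
  obtain ⟨a, ha⟩ : A'.Nonempty := by
    rw [← Finset.card_pos]
    have : (0 : ℝ) < (A'.card : ℝ) := by linarith
    exact_mod_cast this
  have ha1 : a.1 = 0 := hA a ha
  -- choose b adjacent to a
  have hBsub : B' \ N a ⊆ C 1 \ N a := by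
    intro u hu
    rw [Finset.mem_sdiff] at hu ⊢
    exact ⟨(hmemC 1 u).2 (hB u hu.1), hu.2⟩
  have hBmiss : ((B' \ N a).card : ℝ) < η * n := by
    have h1 : (B' \ N a).card ≤ (C 1 \ N a).card := Finset.card_le_card hBsub
    have h2 := hmiss a 1 (by rw [ha1]; exact fin3_10)
    have h1' : ((B' \ N a).card : ℝ) ≤ ((C 1 \ N a).card : ℝ) := by exact_mod_cast h1
    linarith
  obtain ⟨b, hb⟩ : (B' ∩ N a).Nonempty := by
    rw [← Finset.card_pos]
    have h2 : (B' ∩ N a).card + (B' \ N a).card = B'.card :=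
      Finset.card_inter_add_card_sdiff _ _
    have h2' : ((B' ∩ N a).card : ℝ) + ((B' \ N a).card : ℝ) = (B'.card : ℝ) := by
      exact_mod_cast h2
    have : (0 : ℝ) < ((B' ∩ N a).card : ℝ) := by linarith
    exact_mod_cast this
  rw [Finset.mem_inter] at hb
  have hab : K.Adj a b := (hmemN a b).1 hb.2
  have hb1 : b.1 = 1 := hB b hb.1
  -- choose c adjacent to both a and b
  have hCa : ((C' \ N a).card : ℝ) < η * n := by
    have hsub : C' \ N a ⊆ C 2 \ N a := by
      intro u hu
      rw [Finset.mem_sdiff] at hu ⊢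
      exact ⟨(hmemC 2 u).2 (hC u hu.1), hu.2⟩
    have h1 : (C' \ N a).card ≤ (C 2 \ N a).card := Finset.card_le_card hsub
    have h2 := hmiss a 2 (by rw [ha1]; exact fin3_20)
    have h1' : ((C' \ N a).card : ℝ) ≤ ((C 2 \ N a).card : ℝ) := by exact_mod_cast h1
    linarith
  have hCb : ((C' \ N b).card : ℝ) < η * n := by
    have hsub : C' \ N b ⊆ C 2 \ N b := by
      intro u hu
      rw [Finset.mem_sdiff] at hu ⊢
      exact ⟨(hmemC 2 u).2 (hC u hu.1), hu.2⟩
    have h1 : (C' \ N b).card ≤ (C 2 \ N b).card := Finset.card_le_card hsub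
    have h2 := hmiss b 2 (by rw [hb1]; exact fin3_21)
    have h1' : ((C' \ N b).card : ℝ) ≤ ((C 2 \ N b).card : ℝ) := by exact_mod_cast h1
    linarith
  obtain ⟨c, hc⟩ : (C' ∩ (N a ∩ N b)).Nonempty := by
    rw [← Finset.card_pos]
    have hsub : C' \ (N a ∩ N b) ⊆ (C' \ N a) ∪ (C' \ N b) := by
      intro u hu
      rw [Finset.mem_sdiff, Finset.mem_inter] at hu
      rw [Finset.mem_union, Finset.mem_sdiff, Finset.mem_sdiff]
      by_cases h : u ∈ N a
      · exact Or.inr ⟨hu.1, fun h' => hu.2 ⟨h, h'⟩⟩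
      · exact Or.inl ⟨hu.1, h⟩
    have h1 : (C' \ (N a ∩ N b)).card ≤ (C' \ N a).card + (C' \ N b).card := by
      calc (C' \ (N a ∩ N b)).card ≤ ((C' \ N a) ∪ (C' \ N b)).card :=
            Finset.card_le_card hsub
        _ ≤ (C' \ N a).card + (C' \ N b).card := Finset.card_union_le _ _
    have h2 : (C' ∩ (N a ∩ N b)).card + (C' \ (N a ∩ N b)).card = C'.card :=
      Finset.card_inter_add_card_sdiff _ _
    have h1' : ((C' \ (N a ∩ N b)).card : ℝ) ≤
        ((C' \ N a).card : ℝ) + ((C' \ N b).card : ℝ) := by exact_mod_cast h1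
    have h2' : ((C' ∩ (N a ∩ N b)).card : ℝ) + ((C' \ (N a ∩ N b)).card : ℝ)
        = (C'.card : ℝ) := by exact_mod_cast h2
    have : (0 : ℝ) < ((C' ∩ (N a ∩ N b)).card : ℝ) := by linarith
    exact_mod_cast this
  rw [Finset.mem_inter, Finset.mem_inter] at hc
  exact ⟨a, ha, b, hb.1, c, hc.1, hab, (hmemN b c).1 hc.2.2, (hmemN a c).1 hc.2.1⟩
end
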